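/- Let G be a connected simple graph with λ := λ₁(G) > 2 and σ := (λ + √(λ² − 4))/2. Let x be a principal eigenvector of G, let v₁ be a vertex attaining the minimum entry of x and v_k a vertex attaining the maximum entry of x, and let v₁, v₂, …, v_k be a path in G from v₁ to v_k (of length k − 1). Then for every j with 1 ≤ j ≤ k, the principal ratio satisfies γ(G) ≤ ((σ^j − σ^{−j})/(σ − σ^{−1})) · (1/x_{v_j}). Moreover, equality holds if the vertices v₁, v₂, …, v_j form a pendant path in G (i.e., v₁ has degree one and v₂, …, v_{j} each have degree two along the path, with internal vertices of degree two). -/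

import Mathlib

open Classical Matrix

/-- The adjacency matrix of a simple graph on `Fin n`, with real entries. -/
noncomputable def adjMat {n : ℕ} (G : SimpleGraph (Fin n)) : Matrix (Fin n) (Fin n) ℝ :=
  Matrix.of fun u v => if G.Adj u v then (1 : ℝ) else 0

/-- `x` is a principal (Perron) eigenvector of the connected graph `G` with eigenvalue `lam`:
it is a positive eigenvector of the adjacency matrix.  By Perron–Frobenius, for a connected
graph this forces `lam = λ₁(G)`. -/
def IsPrincipalEigenpair {n : ℕ} (G : SimpleGraph (Fin n)) (lam : ℝ) (x : Fin n → ℝ) : Prop :=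
  (∀ v, 0 < x v) ∧ adjMat G *ᵥ x = lam • x

/-- The ratio of the maximum to the minimum entry of a vector. -/
noncomputable def pRatio {n : ℕ} (x : Fin n → ℝ) : ℝ := (⨆ v, x v) / (⨅ v, x v)

/-- Degree of a vertex. -/
noncomputable def deg {n : ℕ} (G : SimpleGraph (Fin n)) (v : Fin n) : ℕ :=
  (G.neighborSet v).ncard

/-- The kite (lollipop) graph on `Fin n`: a path on the vertices `0, 1, …, r-1`
followed by a clique on the vertices `r-1, r, …, n-1`, i.e. `P_r · K_{n-r+1}`. -/
def kiteGraph (n r : ℕ) : SimpleGraph (Fin n) where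
  Adj u v := u ≠ v ∧
    ((u.val < r ∧ v.val < r ∧ (u.val + 1 = v.val ∨ v.val + 1 = u.val)) ∨
      (r ≤ u.val + 1 ∧ r ≤ v.val + 1))
  symm := by
    constructor
    rintro u v ⟨h1, h2⟩
    exact ⟨h1.symm, by tauto⟩
  loopless := by
    constructor
    rintro u ⟨h1, -⟩
    exact h1 rfl

noncomputable def sigma' (lam : ℝ) : ℝ := (lam + Real.sqrt (lam ^ 2 - 4)) / 2

/-- Chebyshev-like sequence. -/
noncomputable def cheb (s : ℝ) (j : ℕ) : ℝ := (s ^ j - (s ^ j)⁻¹) / (s - s⁻¹)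

lemma eig_sum {n : ℕ} {G : SimpleGraph (Fin n)} {lam : ℝ} {x : Fin n → ℝ}
    (hpe : IsPrincipalEigenpair G lam x) (w : Fin n) :
    lam * x w = ∑ u ∈ G.neighborFinset w, x u := by
  have h := congrFun hpe.2 w
  simp only [Matrix.mulVec, dotProduct, adjMat, Matrix.of_apply, Pi.smul_apply,
    smul_eq_mul, ite_mul, one_mul, zero_mul] at h
  rw [← h, SimpleGraph.neighborFinset_eq_filter, Finset.sum_filter]

lemma deg_eq_card {n : ℕ} (G : SimpleGraph (Fin n)) (w : Fin n) :
    deg G w = (G.neighborFinset w).card := by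
  rw [deg, Set.ncard_eq_toFinset_card']
  rfl

lemma nbr_le {n : ℕ} {G : SimpleGraph (Fin n)} {lam : ℝ} {x : Fin n → ℝ}
    (hpe : IsPrincipalEigenpair G lam x) {w u : Fin n} (h : G.Adj w u) :
    x u ≤ lam * x w := by
  rw [eig_sum hpe]
  exact Finset.single_le_sum (fun i _ => (hpe.1 i).le) (by simp [h])

lemma two_nbr_le {n : ℕ} {G : SimpleGraph (Fin n)} {lam : ℝ} {x : Fin n → ℝ}
    (hpe : IsPrincipalEigenpair G lam x) {w u1 u2 : Fin n} (h1 : G.Adj w u1)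
    (h2 : G.Adj w u2) (h12 : u1 ≠ u2) :
    x u1 + x u2 ≤ lam * x w := by
  rw [eig_sum hpe]
  have hsub : ({u1, u2} : Finset (Fin n)) ⊆ G.neighborFinset w := by
    intro a ha
    simp only [Finset.mem_insert, Finset.mem_singleton] at ha
    rcases ha with rfl | rfl <;> simp [h1, h2]
  calc x u1 + x u2 = ∑ u ∈ ({u1, u2} : Finset (Fin n)), x u := (Finset.sum_pair h12).symm
    _ ≤ _ := Finset.sum_le_sum_of_subset_of_nonneg hsub (fun i _ _ => (hpe.1 i).le)

lemma deg_one_eq {n : ℕ} {G : SimpleGraph (Fin n)} {lam : ℝ} {x : Fin n → ℝ}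
    (hpe : IsPrincipalEigenpair G lam x) {w u : Fin n} (h : G.Adj w u)
    (hd : deg G w = 1) : lam * x w = x u := by
  rw [eig_sum hpe]
  have hcard : (G.neighborFinset w).card = 1 := by rw [← deg_eq_card, hd]
  obtain ⟨a, ha⟩ := Finset.card_eq_one.mp hcard
  have hu : u = a := by
    have : u ∈ G.neighborFinset w := by simp [h]
    rw [ha, Finset.mem_singleton] at this
    exact this
  rw [ha, Finset.sum_singleton, hu]

lemma deg_two_eq {n : ℕ} {G : SimpleGraph (Fin n)} {lam : ℝ} {x : Fin n → ℝ}
    (hpe : IsPrincipalEigenpair G lam x) {w u1 u2 : Fin n} (h1 : G.Adj w u1)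
    (h2 : G.Adj w u2) (h12 : u1 ≠ u2) (hd : deg G w = 2) :
    lam * x w = x u1 + x u2 := by
  have hsub : ({u1, u2} : Finset (Fin n)) ⊆ G.neighborFinset w := by
    intro a ha
    simp only [Finset.mem_insert, Finset.mem_singleton] at ha
    rcases ha with rfl | rfl <;> simp [h1, h2]
  have hcard : (G.neighborFinset w).card = 2 := by rw [← deg_eq_card, hd]
  have heqs : ({u1, u2} : Finset (Fin n)) = G.neighborFinset w :=
    Finset.eq_of_subset_of_card_le hsub (by rw [hcard, Finset.card_pair h12])
  rw [eig_sum hpe, ← heqs, Finset.sum_pair h12]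

/-- Cioabă–Gregory / Tait–Tobin upper bound for the principal ratio along a path from a
minimum-entry vertex to a maximum-entry vertex, with equality when `v₁, …, v_j` form a
pendant path.  The principal eigenvector is scaled so that its maximum entry is `1`. -/
theorem principal_ratio_upper_bound
    {n k : ℕ} (G : SimpleGraph (Fin n)) (hG : G.Connected)
    (lam : ℝ) (x : Fin n → ℝ) (hpe : IsPrincipalEigenpair G lam x) (hlam : 2 < lam)
    (hk : 1 ≤ k) (v : Fin k → Fin n) (hinj : Function.Injective v)
    (hpath : ∀ (i : ℕ) (hi : i + 1 < k), G.Adj (v ⟨i, by omega⟩) (v ⟨i + 1, hi⟩))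
    (hmin : ∀ u, x (v ⟨0, by omega⟩) ≤ x u)
    (hmax : ∀ u, x u ≤ 1)
    (hscale : x (v ⟨k - 1, by omega⟩) = 1) :
    ∀ (j : ℕ) (_hj1 : 1 ≤ j) (_hjk : j ≤ k),
      pRatio x ≤ (sigma' lam ^ j - (sigma' lam ^ j)⁻¹) / (sigma' lam - (sigma' lam)⁻¹) *
          (1 / x (v ⟨j - 1, by omega⟩)) ∧
      ((deg G (v ⟨0, by omega⟩) = 1 ∧
          ∀ (i : ℕ) (_h1 : 1 ≤ i) (_h2 : i + 1 < j), deg G (v ⟨i, by omega⟩) = 2) →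
        pRatio x = (sigma' lam ^ j - (sigma' lam ^ j)⁻¹) / (sigma' lam - (sigma' lam)⁻¹) *
          (1 / x (v ⟨j - 1, by omega⟩))) := by
  have hx : ∀ u, 0 < x u := hpe.1
  set σ := sigma' lam with hσdef
  have hs0 : (0:ℝ) ≤ lam ^ 2 - 4 := by nlinarith
  have hs2 : Real.sqrt (lam ^ 2 - 4) ^ 2 = lam ^ 2 - 4 := Real.sq_sqrt hs0
  have hsnn : 0 ≤ Real.sqrt (lam ^ 2 - 4) := Real.sqrt_nonneg _
  have hσ1 : 1 < σ := by rw [hσdef, sigma']; nlinarith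
  have hσpos : (0:ℝ) < σ := by linarith
  have hσ0 : σ ≠ 0 := ne_of_gt hσpos
  have hmul : σ * (lam - σ) = 1 := by
    rw [hσdef, sigma']
    linear_combination (-(1:ℝ)/4) * hs2
  have hinv : σ⁻¹ = lam - σ := inv_eq_of_mul_eq_one_right hmul
  have hinvpos : (0:ℝ) < σ⁻¹ := by positivity
  have hinvlt1 : σ⁻¹ < 1 := by
    rw [inv_lt_one_iff₀]; right; exact hσ1
  have hdenpos : (0:ℝ) < σ - σ⁻¹ := by linarith
  have hden0 : σ - σ⁻¹ ≠ 0 := ne_of_gt hdenpos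
  have hσinv : σ * σ⁻¹ = 1 := mul_inv_cancel₀ hσ0
  have hlamσ : lam = σ + σ⁻¹ := by rw [hinv]; ring
  -- cheb facts
  have hcheb1 : cheb σ 1 = 1 := by rw [cheb, pow_one, div_self hden0]
  have hchebpos : ∀ j, 1 ≤ j → 0 < cheb σ j := by
    intro j hj
    apply div_pos _ hdenpos
    have h1 : 1 < σ ^ j := one_lt_pow₀ hσ1 (by omega)
    have h2 : (σ ^ j)⁻¹ < 1 := by rw [inv_lt_one_iff₀]; right; exact h1
    linarith
  have hchebmul : ∀ m : ℕ, cheb σ m * (σ - σ⁻¹) = σ ^ m - σ⁻¹ ^ m := by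
    intro m
    rw [cheb, ← inv_pow, div_mul_cancel₀ _ hden0]
  have hcheb2 : cheb σ 2 = lam := by
    rw [hlamσ]
    apply mul_right_cancel₀ hden0
    linear_combination hchebmul 2
  have hrec : ∀ i : ℕ, σ⁻¹ * cheb σ (i + 1) + σ ^ (i + 1) = cheb σ (i + 1 + 1) := by
    intro i
    apply mul_right_cancel₀ hden0
    linear_combination σ⁻¹ * hchebmul (i + 1) - hchebmul (i + 1 + 1)
  have hrec2 : ∀ i : ℕ, lam * cheb σ (i + 1 + 1) - cheb σ (i + 1) = cheb σ (i + 2 + 1) := by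
    intro i
    apply mul_right_cancel₀ hden0
    rw [hlamσ]
    linear_combination (σ + σ⁻¹) * hchebmul (i + 1 + 1) - hchebmul (i + 1) -
      hchebmul (i + 2 + 1) + (σ ^ (i + 1) - σ⁻¹ ^ (i + 1)) * hσinv
  -- basic vertices
  have hk0 : 0 < k := hk
  have hNe : Nonempty (Fin n) := ⟨v ⟨0, hk0⟩⟩
  have hx0 : 0 < x (v ⟨0, hk0⟩) := hx _
  have hsup : (⨆ u, x u) = 1 := by
    apply le_antisymm (ciSup_le hmax)
    calc (1:ℝ) = x (v ⟨k - 1, by omega⟩) := hscale.symm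
      _ ≤ ⨆ u, x u := le_ciSup (Set.finite_range x).bddAbove _
  have hinf : (⨅ u, x u) = x (v ⟨0, hk0⟩) :=
    le_antisymm (ciInf_le (Set.finite_range x).bddBelow _) (le_ciInf hmin)
  have hpr : pRatio x = 1 / x (v ⟨0, hk0⟩) := by rw [pRatio, hsup, hinf]
  -- key inequality along the path
  have key : ∀ i : ℕ, ∀ hi : i + 1 < k,
      x (v ⟨i + 1, hi⟩) - σ⁻¹ * x (v ⟨i, by omega⟩) ≤ σ ^ (i + 1) * x (v ⟨0, hk0⟩) := by
    intro i
    induction i with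
    | zero =>
      intro hi
      have h1 := nbr_le hpe (hpath 0 hi)
      have h2 : lam * x (v ⟨0, hk0⟩) = σ * x (v ⟨0, hk0⟩) + σ⁻¹ * x (v ⟨0, hk0⟩) := by
        rw [hlamσ]; ring
      have h3 : σ ^ (0 + 1) = σ := pow_one σ
      rw [h3]
      have h1' : x (v ⟨0 + 1, hi⟩) ≤ lam * x (v ⟨0, hk0⟩) := h1
      linarith
    | succ m ih =>
      intro hi
      have hadj1 : G.Adj (v ⟨m + 1, by omega⟩) (v ⟨m, by omega⟩) := (hpath m (by omega)).symm
      have hadj2 : G.Adj (v ⟨m + 1, by omega⟩) (v ⟨m + 2, hi⟩) := hpath (m + 1) hi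
      have hne12 : v ⟨m, by omega⟩ ≠ v (⟨m + 2, hi⟩ : Fin k) := by
        intro h
        have := hinj h
        simp only [Fin.mk.injEq] at this
        omega
      have hB := two_nbr_le hpe hadj1 hadj2 hne12
      have ih' := ih (by omega)
      have h2 : lam * x (v ⟨m + 1, by omega⟩) =
          σ * x (v ⟨m + 1, by omega⟩) + σ⁻¹ * x (v ⟨m + 1, by omega⟩) := by
        rw [hlamσ]; ring
      have step1 : x (v ⟨m + 2, hi⟩) - σ⁻¹ * x (v ⟨m + 1, by omega⟩) ≤
          σ * (x (v ⟨m + 1, by omega⟩) - σ⁻¹ * x (v ⟨m, by omega⟩)) := by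
        have h3 : σ * (x (v ⟨m + 1, by omega⟩) - σ⁻¹ * x (v ⟨m, by omega⟩)) =
            σ * x (v ⟨m + 1, by omega⟩) - x (v ⟨m, by omega⟩) := by
          have : σ * (σ⁻¹ * x (v ⟨m, by omega⟩)) = x (v ⟨m, by omega⟩) := by
            rw [← mul_assoc, hσinv, one_mul]
          linarith [this]
        rw [h3]
        linarith
      have step2 : σ * (x (v ⟨m + 1, by omega⟩) - σ⁻¹ * x (v ⟨m, by omega⟩)) ≤
          σ * (σ ^ (m + 1) * x (v ⟨0, hk0⟩)) := by
        exact mul_le_mul_of_nonneg_left ih' hσpos.le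
      calc x (v ⟨m + 1 + 1, hi⟩) - σ⁻¹ * x (v ⟨m + 1, by omega⟩) ≤
            σ * (σ ^ (m + 1) * x (v ⟨0, hk0⟩)) := step1.trans step2
        _ = σ ^ (m + 1 + 1) * x (v ⟨0, hk0⟩) := by ring
  -- main bound
  have main : ∀ i : ℕ, ∀ hik : i < k, x (v ⟨i, hik⟩) ≤ cheb σ (i + 1) * x (v ⟨0, hk0⟩) := by
    intro i
    induction i with
    | zero =>
      intro hik
      rw [hcheb1, one_mul]
    | succ m ih =>
      intro hik
      have h1 := key m hik
      have h2 := ih (by omega)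
      have h3 := hrec m
      have h4 : cheb σ (m + 1 + 1) * x (v ⟨0, hk0⟩) =
          σ⁻¹ * cheb σ (m + 1) * x (v ⟨0, hk0⟩) + σ ^ (m + 1) * x (v ⟨0, hk0⟩) := by
        rw [← h3]; ring
      have h5 : σ⁻¹ * x (v ⟨m, by omega⟩) ≤ σ⁻¹ * (cheb σ (m + 1) * x (v ⟨0, hk0⟩)) :=
        mul_le_mul_of_nonneg_left h2 hinvpos.le
      rw [h4]
      linarith
  intro j hj1 hjk
  obtain ⟨j', rfl⟩ : ∃ j', j = j' + 1 := ⟨j - 1, by omega⟩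
  have hj'k : j' < k := by omega
  have hxj : 0 < x (v ⟨j', hj'k⟩) := hx _
  have hcpos : 0 < cheb σ (j' + 1) := hchebpos _ (by omega)
  have hgoal1 : pRatio x ≤ cheb σ (j' + 1) * (1 / x (v ⟨j' + 1 - 1, by omega⟩)) := by
    rw [hpr]
    have hm := main j' hj'k
    have hvv : x (v ⟨j' + 1 - 1, by omega⟩) = x (v ⟨j', hj'k⟩) := rfl
    rw [hvv, mul_one_div, div_le_div_iff₀ hx0 hxj]
    linarith
  constructor
  · exact hgoal1
  · rintro ⟨hdeg1, hdeg2⟩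
    -- exact values along a pendant path
    have eqmain : ∀ i, i ≤ j' → ∀ hik : i < k,
        x (v ⟨i, hik⟩) = cheb σ (i + 1) * x (v ⟨0, hk0⟩) := by
      intro i
      induction i using Nat.strong_induction_on with
      | _ i IH =>
        intro hij hik
        match i with
        | 0 => rw [hcheb1, one_mul]
        | 1 =>
          have hadj := hpath 0 (by omega)
          have hC := deg_one_eq hpe hadj hdeg1
          have : cheb σ (1 + 1) = lam := hcheb2
          rw [this, ← hC]
        | (m + 2) =>
          have e1 := IH m (by omega) (by omega) (by omega)
          have e2 := IH (m + 1) (by omega) (by omega) (by omega)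
          have hdm : deg G (v ⟨m + 1, by omega⟩) = 2 := hdeg2 (m + 1) (by omega) (by omega)
          have hadj1 : G.Adj (v ⟨m + 1, by omega⟩) (v ⟨m, by omega⟩) :=
            (hpath m (by omega)).symm
          have hadj2 : G.Adj (v ⟨m + 1, by omega⟩) (v ⟨m + 2, hik⟩) := hpath (m + 1) hik
          have hne12 : v ⟨m, by omega⟩ ≠ v (⟨m + 2, hik⟩ : Fin k) := by
            intro h
            have := hinj h
            simp only [Fin.mk.injEq] at this
            omega
          have hD := deg_two_eq hpe hadj1 hadj2 hne12 hdm
          have h4 := hrec2 m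
          have : x (v ⟨m + 2, hik⟩) = lam * x (v ⟨m + 1, by omega⟩) - x (v ⟨m, by omega⟩) := by
            linarith
          rw [this, e1, e2, ← h4]
          ring
    have hveq : x (v ⟨j' + 1 - 1, by omega⟩) = cheb σ (j' + 1) * x (v ⟨0, hk0⟩) :=
      eqmain j' le_rfl hj'k
    have : cheb σ (j' + 1) * (1 / x (v ⟨j' + 1 - 1, by omega⟩)) = 1 / x (v ⟨0, hk0⟩) := by
      have hc0 : cheb σ (j' + 1) ≠ 0 := ne_of_gt hcpos
      have hx0' : x (v ⟨0, hk0⟩) ≠ 0 := ne_of_gt hx0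
      rw [hveq, mul_one_div]
      field_simp
    rw [hpr]
    exact this.symm
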